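/- Let m ≥ 3 and ε ∈ 𝔽₂. The 𝔽₂-dimension of the code C^ε equals 2^{m−1}·(2^m + (−1)^ε) − (2m + 1), where (−1)^ε means +1 if ε = 0 and −1 if ε = 1. (That is, C^ε is an [f_ε(m), f_ε(m) − (2m+1), 4] code with f_ε(m) = 2^{m−1}(2^m+(−1)^ε).) -/

import Mathlib

open Matrix

/-- Row vectors in `𝔽₂^{2m}`, with coordinates indexed by `Fin m ⊕ Fin m`
(the first block and the second block of `m` coordinates). -/
abbrev Vm (m : ℕ) := (Fin m ⊕ Fin m) → ZMod 2

/-- The block matrix `e = (0 Iₘ; 0 0)`. -/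
def eMat (m : ℕ) : Matrix (Fin m ⊕ Fin m) (Fin m ⊕ Fin m) (ZMod 2) :=
  Matrix.fromBlocks 0 1 0 0

/-- The block matrix `f = e + eᵀ = (0 Iₘ; Iₘ 0)`. -/
def fMat (m : ℕ) : Matrix (Fin m ⊕ Fin m) (Fin m ⊕ Fin m) (ZMod 2) :=
  eMat m + (eMat m)ᵀ

/-- The alternating bilinear form `φ(u,v) = u f vᵀ`. -/
def phi (m : ℕ) (u v : Vm m) : ZMod 2 := u ⬝ᵥ (fMat m).mulVec v

/-- The quadratic form `θ₀(u) = u e uᵀ`. -/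
def theta0 (m : ℕ) (u : Vm m) : ZMod 2 := u ⬝ᵥ (eMat m).mulVec u

/-- The quadratic form `θ_a(u) = θ₀(u) + φ(u,a)`. -/
def theta (m : ℕ) (a u : Vm m) : ZMod 2 := theta0 m u + phi m u a

/-- The transvection `t_c : u ↦ u + φ(u,c)·c`. -/
def tvec (m : ℕ) (c u : Vm m) : Vm m := u + phi m u c • c

/-- The point set `V^ε = {v : θ₀(v) = ε}` as a subtype. -/
abbrev Veps (m : ℕ) (ε : ZMod 2) := {v : Vm m // theta0 m v = ε}

/-- The characteristic vector of a finite set. -/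
def chi {α : Type*} [DecidableEq α] (S : Finset α) : α → ZMod 2 :=
  fun x => if x ∈ S then 1 else 0

/-- The code `C^ε`: the `𝔽₂`-span of the characteristic vectors of
4-element subsets of `V^ε` summing to zero. -/
def Ceps (m : ℕ) (ε : ZMod 2) : Submodule (ZMod 2) (Veps m ε → ZMod 2) :=
  Submodule.span (ZMod 2)
    {w | ∃ S : Finset (Veps m ε), S.card = 4 ∧ (∑ x ∈ S, (x : Vm m)) = 0 ∧ w = chi S}

/-- The code `C^a`: the `𝔽₂`-span of the characteristic vectors of
4-element subsets of `V` summing to zero whose `θ₀`-values sum to zero. -/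
def Ca (m : ℕ) : Submodule (ZMod 2) (Vm m → ZMod 2) :=
  Submodule.span (ZMod 2)
    {w | ∃ T : Finset (Vm m), T.card = 4 ∧ (∑ x ∈ T, x) = 0 ∧
         (∑ x ∈ T, theta0 m x) = 0 ∧ w = chi T}


/-! ### Auxiliary development -/

variable {m : ℕ}

lemma z2cases (x : ZMod 2) : x = 0 ∨ x = 1 := by revert x; decide
lemma z2ne (x : ZMod 2) (h : x ≠ 0) : x = 1 := by rcases z2cases x with h'|h' <;> simp_all
lemma z2add_self (a : ZMod 2) : a + a = 0 := by revert a; decide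

/-- swap of the two blocks of coordinates -/
def sw (v : Vm m) : Vm m := fun k => v k.swap

lemma eMat_mulVec (v : Vm m) :
    (eMat m).mulVec v = fun k => Sum.elim (fun i => v (Sum.inr i)) (fun _ => 0) k := by
  funext k
  cases k with
  | inl i =>
    simp [eMat, mulVec, dotProduct, Fintype.sum_sum_type, fromBlocks, one_apply]
  | inr i =>
    simp [eMat, mulVec, dotProduct, Fintype.sum_sum_type, fromBlocks]

lemma theta0_eq (v : Vm m) : theta0 m v = ∑ i : Fin m, v (Sum.inl i) * v (Sum.inr i) := by
  simp [theta0, eMat_mulVec, dotProduct, Fintype.sum_sum_type]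

lemma phi_eq_dot (u v : Vm m) : phi m u v = u ⬝ᵥ sw v := by
  have h : (fMat m).mulVec v = sw v := by
    funext k
    cases k with
    | inl i =>
      simp [fMat, eMat, mulVec, dotProduct, Fintype.sum_sum_type, fromBlocks, one_apply, sw,
        Matrix.add_apply, Matrix.transpose_apply]
    | inr i =>
      simp [fMat, eMat, mulVec, dotProduct, Fintype.sum_sum_type, fromBlocks, one_apply, sw,
        Matrix.add_apply, Matrix.transpose_apply]
  rw [phi, h]

lemma phi_eq (u v : Vm m) :
    phi m u v = ∑ i : Fin m, (u (Sum.inl i) * v (Sum.inr i) + u (Sum.inr i) * v (Sum.inl i)) := by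
  simp [phi_eq_dot, dotProduct, sw, Fintype.sum_sum_type, Finset.sum_add_distrib]

lemma phi_comm (u v : Vm m) : phi m u v = phi m v u := by
  simp only [phi_eq]
  congr 1; funext i; ring

lemma theta0_add (u v : Vm m) : theta0 m (u + v) = theta0 m u + theta0 m v + phi m u v := by
  simp only [theta0_eq, phi_eq, Pi.add_apply, ← Finset.sum_add_distrib]
  congr 1; funext i; ring

lemma phi_add_left (u v w : Vm m) : phi m (u + v) w = phi m u w + phi m v w := by
  simp only [phi_eq, Pi.add_apply, ← Finset.sum_add_distrib]
  congr 1; funext i; ring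

lemma phi_add_right (u v w : Vm m) : phi m u (v + w) = phi m u v + phi m u w := by
  simp only [phi_eq, Pi.add_apply, ← Finset.sum_add_distrib]
  congr 1; funext i; ring

lemma phi_zero_right (v : Vm m) : phi m v 0 = 0 := by simp [phi_eq]
lemma theta0_zero : theta0 m 0 = 0 := by simp [theta0_eq]

lemma phi_smul_left (c : ZMod 2) (u v : Vm m) : phi m (c • u) v = c * phi m u v := by
  simp only [phi_eq, Pi.smul_apply, smul_eq_mul, Finset.mul_sum]
  congr 1; funext i; ring

lemma phi_smul_right (c : ZMod 2) (u v : Vm m) : phi m u (c • v) = c * phi m u v := by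
  rw [phi_comm, phi_smul_left, phi_comm]

lemma vadd_self (x : Vm m) : x + x = 0 := funext fun k => z2add_self (x k)

lemma vadd_eq_zero_iff (x y : Vm m) : x + y = 0 ↔ x = y := by
  constructor
  · intro h0
    funext k
    have := congrFun h0 k
    have h2 : ∀ a b : ZMod 2, a + b = 0 → a = b := by decide
    exact h2 _ _ this
  · intro h0; rw [h0]; exact vadd_self y

/-! ### Hitting prescribed values with linear functionals -/

section dot
variable {ι : Type*} [Fintype ι] [DecidableEq ι]

lemma dot10 (p q : ι → ZMod 2) (hp : p ≠ 0) (hpq : p ≠ q) :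
    ∃ u : ι → ZMod 2, u ⬝ᵥ p = 1 ∧ u ⬝ᵥ q = 0 := by
  by_cases h : ∃ k, p k = 1 ∧ q k = 0
  · obtain ⟨k, hk1, hk2⟩ := h
    exact ⟨Pi.single k 1, by simp [single_dotProduct, hk1], by
      simp [single_dotProduct, hk2]⟩
  · push_neg at h
    obtain ⟨j, hj⟩ : ∃ j, p j ≠ 0 := by
      by_contra hc; push_neg at hc; exact hp (funext fun k => hc k)
    have hj1 : p j = 1 := z2ne _ hj
    have hqj : q j = 1 := z2ne _ (h j hj1)
    obtain ⟨k, hk⟩ : ∃ k, p k ≠ q k := by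
      by_contra hc; push_neg at hc; exact hpq (funext fun k => hc k)
    have hpk : p k = 0 := by
      rcases z2cases (p k) with h0|h1
      · exact h0
      · exact absurd (h1.trans (z2ne _ (h k h1)).symm) hk
    have hqk : q k = 1 := by
      rcases z2cases (q k) with h0|h1
      · exact absurd (hpk.trans h0.symm) hk
      · exact h1
    have hjk : j ≠ k := fun e => by rw [e, hpk] at hj1; exact one_ne_zero hj1.symm
    refine ⟨Pi.single j 1 + Pi.single k 1, ?_, ?_⟩
    · simp [add_dotProduct, single_dotProduct, hj1, hpk]
    · simp [add_dotProduct, single_dotProduct, hqj, hqk]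
      decide

lemma dot_pair (p q : ι → ZMod 2) (hp : p ≠ 0) (hq : q ≠ 0) (hpq : p ≠ q) (a b : ZMod 2) :
    ∃ u : ι → ZMod 2, u ⬝ᵥ p = a ∧ u ⬝ᵥ q = b := by
  obtain ⟨u1, hu1p, hu1q⟩ := dot10 p q hp hpq
  obtain ⟨u2, hu2q, hu2p⟩ := dot10 q p hq (Ne.symm hpq)
  refine ⟨a • u1 + b • u2, ?_, ?_⟩
  · simp [add_dotProduct, smul_dotProduct, hu1p, hu2p, hu1q, smul_eq_mul]
  · simp [add_dotProduct, smul_dotProduct, hu1q, hu2q, smul_eq_mul]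

end dot

/-! ### The symplectic form is nondegenerate; hyperbolic pairs in codimension-2 subspaces -/

def phiB (m : ℕ) : LinearMap.BilinForm (ZMod 2) (Vm m) :=
  LinearMap.mk₂ (ZMod 2) (phi m) phi_add_left phi_smul_left phi_add_right phi_smul_right

lemma sw_single (k : Fin m ⊕ Fin m) : sw (Pi.single k.swap (1:ZMod 2)) = Pi.single k 1 := by
  funext j
  simp only [sw, Pi.single_apply]
  by_cases h : j = k
  · simp [h]
  · rw [if_neg (fun e => h (by simpa using congrArg Sum.swap e)), if_neg h]

lemma phiB_nondeg : (phiB m).Nondegenerate := by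
  refine (LinearMap.IsRefl.nondegenerate_iff_separatingLeft (fun x y h => by
    rw [show (phiB m) y x = phi m y x from rfl, phi_comm]; exact h)).mpr ?_
  intro v hv
  funext k
  have := hv (Pi.single k.swap 1)
  rw [show (phiB m) v (Pi.single k.swap 1) = phi m v (Pi.single k.swap 1) from rfl,
    phi_eq_dot, sw_single, dotProduct_single, mul_one] at this
  exact this

lemma phiB_refl : (phiB m).IsRefl := fun x y h => by
  rw [show (phiB m) y x = phi m y x from rfl, phi_comm]
  exact h

def dotL (p : Vm m) : Vm m →ₗ[ZMod 2] ZMod 2 where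
  toFun u := u ⬝ᵥ p
  map_add' u v := add_dotProduct u v p
  map_smul' c u := smul_dotProduct c u p

lemma hyp_pair (hm : 3 ≤ m) (p q : Vm m) :
    ∃ w1 w2 : Vm m, w1 ⬝ᵥ p = 0 ∧ w1 ⬝ᵥ q = 0 ∧ w2 ⬝ᵥ p = 0 ∧ w2 ⬝ᵥ q = 0 ∧ phi m w1 w2 = 1 := by
  classical
  set L := (dotL p).prod (dotL q) with hL
  set W := LinearMap.ker L with hWdef
  have hrank : Module.finrank (ZMod 2) (Vm m) = 2 * m := by
    simp [Module.finrank_pi]; ring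
  have hker : 2 * m ≤ Module.finrank (ZMod 2) W + 2 := by
    have h1 := LinearMap.finrank_range_add_finrank_ker L
    rw [← hWdef] at h1
    have h2 : Module.finrank (ZMod 2) (LinearMap.range L) ≤ 2 := by
      have := Submodule.finrank_le (LinearMap.range L)
      simpa [Module.finrank_prod] using this
    omega
  by_contra hc
  push_neg at hc
  have hiso : ∀ w1 ∈ W, ∀ w2 ∈ W, phi m w1 w2 = 0 := by
    intro w1 h1 w2 h2
    rcases LinearMap.mem_ker.mp h1 with h1'
    rcases LinearMap.mem_ker.mp h2 with h2'
    have e1 : w1 ⬝ᵥ p = 0 ∧ w1 ⬝ᵥ q = 0 := by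
      constructor <;> [exact congrArg Prod.fst h1'; exact congrArg Prod.snd h1']
    have e2 : w2 ⬝ᵥ p = 0 ∧ w2 ⬝ᵥ q = 0 := by
      constructor <;> [exact congrArg Prod.fst h2'; exact congrArg Prod.snd h2']
    by_contra hne
    exact hc w1 w2 e1.1 e1.2 e2.1 e2.2 (z2ne _ hne)
  have hWle : W ≤ (phiB m).orthogonal W := by
    intro w hw
    rw [LinearMap.BilinForm.mem_orthogonal_iff]
    intro n hn
    exact hiso n hn w hw
  have horto := LinearMap.BilinForm.finrank_orthogonal (B := phiB m) phiB_nondeg W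
  have hle := Submodule.finrank_mono hWle
  rw [horto, hrank] at hle
  have hWle2m : Module.finrank (ZMod 2) W ≤ 2 * m := hrank ▸ Submodule.finrank_le W
  omega

lemma sw_inj : Function.Injective (sw (m := m)) := by
  intro a b h
  funext k
  have := congrFun h k.swap
  simpa [sw] using this

lemma sw_zero : sw (m := m) 0 = 0 := rfl

/-! ### The quadric hits all values on codimension ≤ 2 affine subspaces -/

lemma E2 (hm : 3 ≤ m) (z z' : Vm m) (hz : z ≠ 0) (hz' : z' ≠ 0) (hzz : z ≠ z')
    (ε a a' : ZMod 2) :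
    ∃ u : Vm m, theta0 m u = ε ∧ phi m u z = a ∧ phi m u z' = a' := by
  set p := sw z with hp
  set q := sw z' with hq
  have hp0 : p ≠ 0 := fun h => hz (sw_inj (h.trans sw_zero.symm))
  have hq0 : q ≠ 0 := fun h => hz' (sw_inj (h.trans sw_zero.symm))
  have hpq : p ≠ q := fun h => hzz (sw_inj h)
  obtain ⟨u0, hu0p, hu0q⟩ := dot_pair p q hp0 hq0 hpq a a'
  set t := ε + theta0 m u0 with ht
  obtain ⟨w1, w2, h1p, h1q, h2p, h2q, h12⟩ := hyp_pair hm p q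
  have key : ∃ w : Vm m, w ⬝ᵥ p = 0 ∧ w ⬝ᵥ q = 0 ∧ theta0 m w + phi m u0 w = t := by
    rcases z2cases t with ht0 | ht1
    · exact ⟨0, zero_dotProduct _, zero_dotProduct _, by
        rw [theta0_zero, phi_zero_right, ht0, add_zero]⟩
    · rcases z2cases (theta0 m w1 + phi m u0 w1) with hψ1 | hψ1
      · rcases z2cases (theta0 m w2 + phi m u0 w2) with hψ2 | hψ2
        · refine ⟨w1 + w2, by rw [add_dotProduct, h1p, h2p, add_zero],
            by rw [add_dotProduct, h1q, h2q, add_zero], ?_⟩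
          rw [theta0_add, phi_add_right, ht1]
          have : theta0 m w1 + theta0 m w2 + phi m w1 w2 + (phi m u0 w1 + phi m u0 w2)
              = (theta0 m w1 + phi m u0 w1) + (theta0 m w2 + phi m u0 w2) + phi m w1 w2 := by ring
          rw [this, hψ1, hψ2, h12]; decide
        · exact ⟨w2, h2p, h2q, by rw [hψ2, ht1]⟩
      · exact ⟨w1, h1p, h1q, by rw [hψ1, ht1]⟩
  obtain ⟨w, hwp, hwq, hwψ⟩ := key
  refine ⟨u0 + w, ?_, ?_, ?_⟩
  · rw [theta0_add]
    have : theta0 m u0 + theta0 m w + phi m u0 w = theta0 m u0 + (theta0 m w + phi m u0 w) := by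
      ring
    rw [this, hwψ, ht]
    have hxy : ∀ x y : ZMod 2, x + (y + x) = y := by decide
    exact hxy _ _
  · rw [phi_eq_dot, ← hp, add_dotProduct, hwp, add_zero, hu0p]
  · rw [phi_eq_dot, ← hq, add_dotProduct, hwq, add_zero, hu0q]

lemma single_ne_zero' (k : Fin m ⊕ Fin m) : (Pi.single k 1 : Vm m) ≠ 0 := by
  intro h
  have := congrFun h k
  rw [Pi.single_eq_same] at this
  exact one_ne_zero this

lemma E1 (hm : 3 ≤ m) (z : Vm m) (hz : z ≠ 0) (ε a : ZMod 2) :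
    ∃ u : Vm m, theta0 m u = ε ∧ phi m u z = a := by
  set i0 : Fin m := ⟨0, by omega⟩ with hi0
  set i1 : Fin m := ⟨1, by omega⟩ with hi1
  have h3 : i0 ≠ i1 := by simp [hi0, hi1, Fin.ext_iff]
  by_cases hz0 : z = Pi.single (Sum.inl i0) 1
  · have hne : z ≠ Pi.single (Sum.inl i1) 1 := by
      rw [hz0]
      intro h
      have := congrFun h (Sum.inl i0)
      rw [Pi.single_eq_same, Pi.single_eq_of_ne (by simpa using h3)] at this
      exact one_ne_zero this
    obtain ⟨u, h1, h2, _⟩ := E2 hm z (Pi.single (Sum.inl i1) 1) hz (single_ne_zero' _) hne ε a 0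
    exact ⟨u, h1, h2⟩
  · obtain ⟨u, h1, h2, _⟩ := E2 hm z (Pi.single (Sum.inl i0) 1) hz (single_ne_zero' _) hz0 ε a 0
    exact ⟨u, h1, h2⟩

lemma E0 (hm : 3 ≤ m) (ε : ZMod 2) : ∃ u : Vm m, theta0 m u = ε := by
  obtain ⟨u, h1, _⟩ := E1 hm (Pi.single (Sum.inl (⟨0, by omega⟩ : Fin m)) 1)
    (single_ne_zero' _) ε 0
  exact ⟨u, h1⟩

lemma Hrep (hm : 3 ≤ m) (ε : ZMod 2) (z : Vm m) :
    ∃ u : Vm m, theta0 m u = ε ∧ theta0 m (u + z) = ε := by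
  by_cases hz : z = 0
  · obtain ⟨u, hu⟩ := E0 hm ε
    exact ⟨u, hu, by rwa [hz, add_zero]⟩
  · obtain ⟨u, h1, h2⟩ := E1 hm z hz ε (theta0 m z)
    refine ⟨u, h1, ?_⟩
    rw [theta0_add, h1, h2]
    have : ∀ x y : ZMod 2, x + y + y = x := by decide
    exact this _ _

/-! ### Every function orthogonal to the code is affine -/

section beta
variable {ε : ZMod 2} {g : Veps m ε → ZMod 2}
variable (hg : ∀ S : Finset (Veps m ε), S.card = 4 → (∑ x ∈ S, (x : Vm m)) = 0 →
    ∑ x ∈ S, g x = 0)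

include hg in
lemma keyQuad (u v u' v' : Veps m ε) (h : (u : Vm m) + v = u' + v') :
    g u + g v = g u' + g v' := by
  classical
  by_cases huv : u = v
  · subst huv
    have h0 : (u' : Vm m) + v' = 0 := by rw [← h, vadd_self]
    have : u' = v' := Subtype.ext ((vadd_eq_zero_iff _ _).mp h0)
    subst this
    rw [z2add_self, z2add_self]
  by_cases h1 : u = u'
  · have : v = v' := Subtype.ext (by rw [h1] at h; exact add_left_cancel h)
    rw [h1, this]
  by_cases h2 : u = v'
  · have : v = u' := Subtype.ext (by
      rw [h2, add_comm ((u' : Vm m)) ((v' : Vm m))] at h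
      exact add_left_cancel h)
    rw [h2, this]
    exact add_comm _ _
  by_cases h3 : v = u'
  · have : u = v' := Subtype.ext (by
      rw [h3, add_comm ((u : Vm m)) ((u' : Vm m))] at h
      exact add_left_cancel h)
    rw [h3, this]
    exact add_comm _ _
  by_cases h4 : v = v'
  · have : u = u' := Subtype.ext (by
      rw [h4] at h
      exact add_right_cancel h)
    rw [h4, this]
  -- all four points are distinct
  have huv' : u' ≠ v' := by
    intro h5
    subst h5
    have h0 : (u : Vm m) + v = 0 := by rw [h, vadd_self]
    exact huv (Subtype.ext ((vadd_eq_zero_iff _ _).mp h0))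
  set S : Finset (Veps m ε) := {u, v, u', v'} with hS
  have hnm1 : u ∉ ({v, u', v'} : Finset (Veps m ε)) := by simp [huv, h1, h2]
  have hnm2 : v ∉ ({u', v'} : Finset (Veps m ε)) := by simp [h3, h4]
  have hnm3 : u' ∉ ({v'} : Finset (Veps m ε)) := by simp [huv']
  have hcard : S.card = 4 := by
    rw [hS, Finset.card_insert_of_notMem hnm1, Finset.card_insert_of_notMem hnm2,
      Finset.card_insert_of_notMem hnm3, Finset.card_singleton]
  have hsum0 : (∑ x ∈ S, (x : Vm m)) = 0 := by
    rw [hS, Finset.sum_insert hnm1, Finset.sum_insert hnm2, Finset.sum_insert hnm3,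
      Finset.sum_singleton, ← add_assoc, h, vadd_self]
  have := hg S hcard hsum0
  rw [hS, Finset.sum_insert hnm1, Finset.sum_insert hnm2, Finset.sum_insert hnm3,
    Finset.sum_singleton] at this
  have hfin : ∀ a b c d : ZMod 2, a + (b + (c + d)) = 0 → a + b = c + d := by decide
  exact hfin _ _ _ _ this

end beta

section beta2
variable (hm : 3 ≤ m) (ε : ZMod 2) (g : Veps m ε → ZMod 2)

noncomputable def betaFn : Vm m → ZMod 2 := fun z =>
  g ⟨(Hrep hm ε z).choose, (Hrep hm ε z).choose_spec.1⟩ +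
  g ⟨(Hrep hm ε z).choose + z, (Hrep hm ε z).choose_spec.2⟩

variable {ε g}
variable (hg : ∀ S : Finset (Veps m ε), S.card = 4 → (∑ x ∈ S, (x : Vm m)) = 0 →
    ∑ x ∈ S, g x = 0)

include hg in
lemma betaFn_spec (z u : Vm m) (h1 : theta0 m u = ε) (h2 : theta0 m (u + z) = ε) :
    betaFn hm ε g z = g ⟨u, h1⟩ + g ⟨u + z, h2⟩ := by
  apply keyQuad hg
  show (Hrep hm ε z).choose + ((Hrep hm ε z).choose + z) = u + (u + z)
  rw [← add_assoc, vadd_self, zero_add, ← add_assoc, vadd_self, zero_add]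

include hg in
lemma betaFn_zero : betaFn hm ε g 0 = 0 := by
  obtain ⟨u, hu⟩ := E0 hm ε
  have h2 : theta0 m (u + 0) = ε := by rwa [add_zero]
  rw [betaFn_spec hm hg 0 u hu h2]
  have : (⟨u + 0, h2⟩ : Veps m ε) = ⟨u, hu⟩ := Subtype.ext (add_zero u)
  rw [this, z2add_self]

include hg in
lemma betaFn_add (z z' : Vm m) :
    betaFn hm ε g (z + z') = betaFn hm ε g z + betaFn hm ε g z' := by
  by_cases hz : z = 0
  · rw [hz, zero_add, betaFn_zero hm hg, zero_add]
  by_cases hz' : z' = 0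
  · rw [hz', add_zero, betaFn_zero hm hg, add_zero]
  by_cases hzz : z = z'
  · rw [hzz, vadd_self, betaFn_zero hm hg, z2add_self]
  obtain ⟨u, h1, h2, h3⟩ := E2 hm z z' hz hz' hzz ε (theta0 m z)
    (theta0 m (z + z') + theta0 m z)
  have hab : ∀ a b : ZMod 2, a + b + b = a := by decide
  have hth2 : theta0 m (u + z) = ε := by
    rw [theta0_add, h1, h2, hab]
  have hth3 : theta0 m (u + (z + z')) = ε := by
    rw [theta0_add, h1, phi_add_right, h2, h3]
    have h' : ∀ a b c : ZMod 2, a + b + (c + (b + c)) = a := by decide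
    exact h' _ _ _
  have hth3' : theta0 m ((u + z) + z') = ε := by rwa [add_assoc]
  rw [betaFn_spec hm hg (z + z') u h1 hth3,
    betaFn_spec hm hg z u h1 hth2,
    betaFn_spec hm hg z' (u + z) hth2 hth3']
  have harg : (⟨u + z + z', hth3'⟩ : Veps m ε) = ⟨u + (z + z'), hth3⟩ :=
    Subtype.ext (add_assoc u z z')
  rw [harg]
  have : ∀ x y w : ZMod 2, x + w = x + y + (y + w) := by decide
  exact this _ _ _

include hg in
lemma betaFn_sum {α : Type*} (s : Finset α) (f : α → Vm m) :
    betaFn hm ε g (∑ a ∈ s, f a) = ∑ a ∈ s, betaFn hm ε g (f a) := by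
  classical
  induction s using Finset.induction with
  | empty => simpa using betaFn_zero hm hg
  | insert _ _ h ih =>
    rw [Finset.sum_insert h, Finset.sum_insert h, betaFn_add hm hg, ih]

include hg in
lemma betaFn_dot (z : Vm m) :
    betaFn hm ε g z = z ⬝ᵥ (fun k => betaFn hm ε g (Pi.single k 1)) := by
  classical
  conv_lhs => rw [show z = ∑ k, Pi.single k (z k) from (Finset.univ_sum_single z).symm]
  rw [betaFn_sum hm hg]
  rw [dotProduct]
  apply Finset.sum_congr rfl
  intro k _
  rcases z2cases (z k) with h | h
  · rw [h, zero_mul]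
    have : (Pi.single k (0:ZMod 2) : Vm m) = 0 := by simp
    rw [this, betaFn_zero hm hg]
  · rw [h, one_mul]

include hm hg in
lemma g_affine : ∃ (b : Vm m) (c : ZMod 2), ∀ v : Veps m ε, g v = (v : Vm m) ⬝ᵥ b + c := by
  obtain ⟨u0, hu0⟩ := E0 hm ε
  set b : Vm m := fun k => betaFn hm ε g (Pi.single k 1) with hb
  refine ⟨b, g ⟨u0, hu0⟩ + u0 ⬝ᵥ b, fun v => ?_⟩
  have h2 : theta0 m (u0 + (u0 + v)) = ε := by
    rw [← add_assoc, vadd_self, zero_add]; exact v.2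
  have hβ := betaFn_spec hm hg (u0 + (v : Vm m)) u0 hu0 h2
  rw [betaFn_dot hm hg, ← hb] at hβ
  have harg : (⟨u0 + (u0 + (v:Vm m)), h2⟩ : Veps m ε) = v :=
    Subtype.ext (show u0 + (u0 + (v:Vm m)) = (v:Vm m) by rw [← add_assoc, vadd_self, zero_add])
  have hgv : g ⟨u0 + (u0 + (v:Vm m)), h2⟩ = g v := congrArg g harg
  have hdot : (u0 + (v:Vm m)) ⬝ᵥ b = u0 ⬝ᵥ b + (v:Vm m) ⬝ᵥ b := add_dotProduct _ _ _
  rw [hgv, hdot] at hβ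
  have hfin : ∀ x y r s : ZMod 2, x + y = r + s → s = y + (r + x) := by decide
  exact hfin _ _ _ _ hβ
end beta2

/-! ### Counting the quadric -/

def dotR (x : Fin m → ZMod 2) : (Fin m → ZMod 2) →ₗ[ZMod 2] ZMod 2 where
  toFun y := x ⬝ᵥ y
  map_add' u v := dotProduct_add x u v
  map_smul' c u := dotProduct_smul c x u

lemma card_fiber (x : Fin m → ZMod 2) (hx : x ≠ 0) (ε : ZMod 2) :
    Fintype.card {y : Fin m → ZMod 2 // x ⬝ᵥ y = ε} = 2 ^ (m - 1) := by
  classical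
  obtain ⟨j, hj⟩ : ∃ j, x j ≠ 0 := by
    by_contra hc; push_neg at hc; exact hx (funext fun k => hc k)
  have hone : x ⬝ᵥ Pi.single j 1 = x j := by
    rw [dotProduct_single, mul_one]
  have hx1 : x j = 1 := by
    rcases z2cases (x j) with h|h
    · exact absurd h hj
    · exact h
  have hsurj : Function.Surjective (dotR x) := by
    intro c
    refine ⟨c • Pi.single j 1, ?_⟩
    show x ⬝ᵥ _ = c
    rw [dotProduct_smul, hone, smul_eq_mul, hx1, mul_one]
  have hrange : LinearMap.range (dotR x) = ⊤ := LinearMap.range_eq_top.mpr hsurj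
  have hrk : Module.finrank (ZMod 2) (LinearMap.ker (dotR x)) = m - 1 := by
    have h1 := LinearMap.finrank_range_add_finrank_ker (dotR x)
    rw [hrange] at h1
    simp only [finrank_top, Module.finrank_self, Module.finrank_pi, Fintype.card_fin] at h1
    omega
  have hcard0 : Fintype.card {y : Fin m → ZMod 2 // x ⬝ᵥ y = 0} = 2 ^ (m - 1) := by
    have : Fintype.card (LinearMap.ker (dotR x)) = 2 ^ (m-1) := by
      rw [Module.card_eq_pow_finrank (K := ZMod 2) (V := LinearMap.ker (dotR x)), hrk, ZMod.card]
    rw [← this]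
    apply Fintype.card_congr
    exact Equiv.subtypeEquivRight (fun y => by simp [LinearMap.mem_ker, dotR])
  obtain ⟨y0, hy0'⟩ := hsurj ε
  have hy0 : x ⬝ᵥ y0 = ε := hy0'
  have e : {y : Fin m → ZMod 2 // x ⬝ᵥ y = ε} ≃ {y : Fin m → ZMod 2 // x ⬝ᵥ y = 0} := by
    refine ⟨fun y => ⟨y.1 + y0, ?_⟩, fun y => ⟨y.1 + y0, ?_⟩, fun y => ?_, fun y => ?_⟩
    · rw [dotProduct_add, y.2, hy0]
      exact CharTwo.add_self_eq_zero ε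
    · rw [dotProduct_add, y.2, hy0, zero_add]
    · ext; simp [add_assoc, CharTwo.add_self_eq_zero]
    · ext; simp [add_assoc, CharTwo.add_self_eq_zero]
  rw [Fintype.card_congr e, hcard0]

lemma card_Veps (ε : ZMod 2) :
    Fintype.card (Veps m ε) = (if ε = 0 then 2 ^ m else 0) + (2 ^ m - 1) * 2 ^ (m - 1) := by
  classical
  have e1 : Veps m ε ≃ {p : (Fin m → ZMod 2) × (Fin m → ZMod 2) // p.1 ⬝ᵥ p.2 = ε} := by
    refine (Equiv.sumArrowEquivProdArrow (Fin m) (Fin m) (ZMod 2)).subtypeEquiv (fun v => ?_)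
    rw [theta0_eq]
    rfl
  have e2 : {p : (Fin m → ZMod 2) × (Fin m → ZMod 2) // p.1 ⬝ᵥ p.2 = ε}
      ≃ Σ x : Fin m → ZMod 2, {y : Fin m → ZMod 2 // x ⬝ᵥ y = ε} :=
    Equiv.subtypeProdEquivSigmaSubtype (fun (x y : Fin m → ZMod 2) => x ⬝ᵥ y = ε)
  rw [Fintype.card_congr (e1.trans e2), Fintype.card_sigma]
  rw [← Finset.sum_erase_add _ _ (Finset.mem_univ (0 : Fin m → ZMod 2))]
  have hz : Fintype.card {y : Fin m → ZMod 2 // (0 : Fin m → ZMod 2) ⬝ᵥ y = ε}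
      = if ε = 0 then 2 ^ m else 0 := by
    rcases z2cases ε with h|h
    · subst h
      simp only [if_pos rfl]
      rw [show (2:ℕ)^m = Fintype.card (Fin m → ZMod 2) by simp [Fintype.card_fun, ZMod.card]]
      apply Fintype.card_congr
      exact Equiv.subtypeUnivEquiv (fun y => by simp)
    · subst h
      simp only [if_neg one_ne_zero]
      rw [Fintype.card_eq_zero_iff]
      exact ⟨fun y => by have := y.2; simp at this⟩
  have hrest : ∀ x ∈ Finset.univ.erase (0 : Fin m → ZMod 2),
      Fintype.card {y : Fin m → ZMod 2 // x ⬝ᵥ y = ε} = 2 ^ (m-1) := by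
    intro x hx
    exact card_fiber x (Finset.ne_of_mem_erase hx) ε
  rw [Finset.sum_congr rfl hrest, Finset.sum_const, hz]
  have hcard : (Finset.univ.erase (0 : Fin m → ZMod 2)).card = 2 ^ m - 1 := by
    rw [Finset.card_erase_of_mem (Finset.mem_univ _), Finset.card_univ]
    simp [Fintype.card_fun, ZMod.card]
  rw [hcard, smul_eq_mul, add_comm]

/-! ### Injectivity of the affine evaluation -/

def sl (a : Fin m) : Vm m := Pi.single (Sum.inl a) 1
def sr (a : Fin m) : Vm m := Pi.single (Sum.inr a) 1

lemma theta0_sl (a : Fin m) : theta0 m (sl a) = 0 := by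
  simp [theta0_eq, sl, Pi.single_apply]

lemma theta0_sr (a : Fin m) : theta0 m (sr a) = 0 := by
  simp [theta0_eq, sr, Pi.single_apply]

lemma phi_sl_sr (a b : Fin m) : phi m (sl a) (sr b) = if a = b then 1 else 0 := by
  simp [phi_eq, sl, sr, Pi.single_apply, eq_comm]

lemma phi_sl_sl (a b : Fin m) : phi m (sl a) (sl b) = 0 := by
  simp [phi_eq, sl, Pi.single_apply]

lemma phi_sr_sr (a b : Fin m) : phi m (sr a) (sr b) = 0 := by
  simp [phi_eq, sr, Pi.single_apply]

lemma sl_dot (a : Fin m) (b : Vm m) : sl a ⬝ᵥ b = b (Sum.inl a) := by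
  simp [sl, single_dotProduct]

lemma sr_dot (a : Fin m) (b : Vm m) : sr a ⬝ᵥ b = b (Sum.inr a) := by
  simp [sr, single_dotProduct]

lemma affine_inj (hm : 3 ≤ m) (ε : ZMod 2) (b : Vm m) (c : ZMod 2)
    (h : ∀ v : Veps m ε, (v : Vm m) ⬝ᵥ b + c = 0) : b = 0 ∧ c = 0 := by
  have hθ0 : theta0 m (0 : Vm m) = 0 := by simp [theta0_eq]
  rcases z2cases ε with hε | hε
  · subst hε
    have hc : c = 0 := by
      have := h ⟨0, hθ0⟩
      rwa [zero_dotProduct, zero_add] at this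
    subst hc
    refine ⟨funext fun k => ?_, rfl⟩
    cases k with
    | inl a =>
      have := h ⟨sl a, theta0_sl a⟩
      rwa [sl_dot, add_zero] at this
    | inr a =>
      have := h ⟨sr a, theta0_sr a⟩
      rwa [sr_dot, add_zero] at this
  · subst hε
    have hθw : ∀ a : Fin m, theta0 m (sl a + sr a) = 1 := fun a => by
      rw [theta0_add, theta0_sl, theta0_sr, phi_sl_sr, if_pos rfl, zero_add, zero_add]
    have hθ1 : ∀ a b' : Fin m, b' ≠ a → theta0 m (sl a + sl b' + sr a) = 1 := by
      intro a b' hne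
      rw [theta0_add, theta0_add, theta0_sl, theta0_sl, theta0_sr, phi_sl_sl, phi_add_left,
        phi_sl_sr, phi_sl_sr, if_pos rfl, if_neg hne]
      decide
    have hθ2 : ∀ a b' : Fin m, a ≠ b' → theta0 m (sl a + (sr a + sr b')) = 1 := by
      intro a b' hne
      rw [theta0_add, theta0_sl, theta0_add, theta0_sr, theta0_sr, phi_sr_sr, phi_add_right,
        phi_sl_sr, phi_sl_sr, if_pos rfl, if_neg hne]
      decide
    have Ew : ∀ a : Fin m, b (Sum.inl a) + b (Sum.inr a) + c = 0 := by
      intro a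
      have := h ⟨sl a + sr a, hθw a⟩
      rwa [add_dotProduct, sl_dot, sr_dot] at this
    have hbl : ∀ k : Fin m, b (Sum.inl k) = 0 := by
      intro k
      set a : Fin m := if k = ⟨0, by omega⟩ then ⟨1, by omega⟩ else ⟨0, by omega⟩ with ha
      have hak : k ≠ a := by
        rw [ha]
        split
        · next hh => rw [hh]; simp [Fin.ext_iff]
        · next hh => exact hh
      have := h ⟨sl a + sl k + sr a, hθ1 a k hak⟩
      rw [add_dotProduct, add_dotProduct, sl_dot, sl_dot, sr_dot] at this
      have hdec : ∀ p q r s : ZMod 2, p + r + s = 0 → p + q + r + s = 0 → q = 0 := by decide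
      exact hdec _ _ _ _ (Ew a) this
    have hbr : ∀ k : Fin m, b (Sum.inr k) = 0 := by
      intro k
      set a : Fin m := if k = ⟨0, by omega⟩ then ⟨1, by omega⟩ else ⟨0, by omega⟩ with ha
      have hak : a ≠ k := by
        rw [ha]
        split
        · next hh => rw [hh]; simp [Fin.ext_iff]
        · next hh => exact fun e => hh e.symm
      have := h ⟨sl a + (sr a + sr k), hθ2 a k hak⟩
      rw [add_dotProduct, add_dotProduct, sl_dot, sr_dot, sr_dot] at this
      have hdec : ∀ p q r s : ZMod 2, p + r + s = 0 → p + (r + q) + s = 0 → q = 0 := by decide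
      exact hdec _ _ _ _ (Ew a) this
    have hc : c = 0 := by
      have := Ew ⟨0, by omega⟩
      rwa [hbl, hbr, zero_add, zero_add] at this
    exact ⟨funext fun k => by cases k with | inl a => exact hbl a | inr a => exact hbr a, hc⟩

/-! ### The dual of the code and the final dimension count -/

def Dsub (m : ℕ) (ε : ZMod 2) : Submodule (ZMod 2) (Veps m ε → ZMod 2) where
  carrier := {g | ∀ S : Finset (Veps m ε), S.card = 4 → (∑ x ∈ S, (x : Vm m)) = 0 →
    ∑ x ∈ S, g x = 0}
  add_mem' := by
    intro f g hf hg S h1 h2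
    simp only [Pi.add_apply, Finset.sum_add_distrib, hf S h1 h2, hg S h1 h2, add_zero]
  zero_mem' := by intro S h1 h2; simp
  smul_mem' := by
    intro c g hg S h1 h2
    simp only [Pi.smul_apply, smul_eq_mul, ← Finset.mul_sum, hg S h1 h2, mul_zero]

def Amap (m : ℕ) (ε : ZMod 2) : (Vm m × ZMod 2) →ₗ[ZMod 2] (Veps m ε → ZMod 2) where
  toFun p := fun v => (v : Vm m) ⬝ᵥ p.1 + p.2
  map_add' p q := by
    funext v
    simp only [Prod.fst_add, Prod.snd_add, dotProduct_add, Pi.add_apply]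
    ring
  map_smul' c p := by
    funext v
    simp only [Prod.smul_fst, Prod.smul_snd, dotProduct_smul, Pi.smul_apply,
      smul_eq_mul, RingHom.id_apply]
    ring

lemma sum_dot {α : Type*} {ι : Type*} [Fintype ι] (s : Finset α) (f : α → ι → ZMod 2)
    (b : ι → ZMod 2) : (∑ a ∈ s, f a) ⬝ᵥ b = ∑ a ∈ s, f a ⬝ᵥ b := by
  simp only [dotProduct, Finset.sum_apply, Finset.sum_mul]
  rw [Finset.sum_comm]

lemma range_Amap (hm : 3 ≤ m) (ε : ZMod 2) : LinearMap.range (Amap m ε) = Dsub m ε := by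
  apply le_antisymm
  · rintro g ⟨⟨b, c⟩, rfl⟩
    intro S h1 h2
    show ∑ x ∈ S, ((x : Vm m) ⬝ᵥ b + c) = 0
    rw [Finset.sum_add_distrib, ← sum_dot, h2, zero_dotProduct, Finset.sum_const, h1,
      zero_add]
    show (4 : ℕ) • c = 0
    rw [nsmul_eq_mul]
    have : ((4 : ℕ) : ZMod 2) = 0 := by decide
    rw [this, zero_mul]
  · intro g hg
    obtain ⟨b, c, hb⟩ := g_affine hm hg
    exact ⟨(b, c), (funext fun v => (hb v).symm)⟩

lemma Amap_inj (hm : 3 ≤ m) (ε : ZMod 2) : Function.Injective (Amap m ε) := by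
  rw [← LinearMap.ker_eq_bot]
  rw [LinearMap.ker_eq_bot']
  rintro ⟨b, c⟩ h
  have h' : ∀ v : Veps m ε, (v : Vm m) ⬝ᵥ b + c = 0 := fun v => congrFun h v
  obtain ⟨hb, hc⟩ := affine_inj hm ε b c h'
  simp [hb, hc, Prod.ext_iff]

lemma finrank_Dsub (hm : 3 ≤ m) (ε : ZMod 2) :
    Module.finrank (ZMod 2) (Dsub m ε) = 2 * m + 1 := by
  rw [← range_Amap hm ε, LinearMap.finrank_range_of_inj (Amap_inj hm ε),
    Module.finrank_prod, Module.finrank_pi, Module.finrank_self, Fintype.card_sum,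
    Fintype.card_fin]
  ring

def dotB (ι : Type*) [Fintype ι] : LinearMap.BilinForm (ZMod 2) (ι → ZMod 2) :=
  LinearMap.mk₂ (ZMod 2) (· ⬝ᵥ ·) add_dotProduct smul_dotProduct
    dotProduct_add dotProduct_smul

lemma dotB_nondeg (ι : Type*) [Fintype ι] [DecidableEq ι] : (dotB ι).Nondegenerate := by
  refine (LinearMap.IsRefl.nondegenerate_iff_separatingLeft (fun x y h => by
    rw [show (dotB ι) y x = y ⬝ᵥ x from rfl, dotProduct_comm]; exact h)).mpr ?_
  intro v hv
  funext k
  have := hv (Pi.single k 1)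
  rwa [show (dotB ι) v (Pi.single k 1) = v ⬝ᵥ Pi.single k 1 from rfl,
    dotProduct_single, mul_one] at this

lemma dotB_refl (ι : Type*) [Fintype ι] : (dotB ι).IsRefl := fun x y h => by
  rw [show (dotB ι) y x = y ⬝ᵥ x from rfl, dotProduct_comm]
  exact h

lemma chi_dot {ι : Type*} [Fintype ι] [DecidableEq ι] (S : Finset ι) (g : ι → ZMod 2) :
    chi S ⬝ᵥ g = ∑ x ∈ S, g x := by
  simp only [dotProduct, chi, ite_mul, one_mul, zero_mul]
  rw [Finset.sum_ite_mem, Finset.univ_inter]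

lemma orth_eq (m : ℕ) (ε : ZMod 2) :
    (dotB (Veps m ε)).orthogonal (Ceps m ε) = Dsub m ε := by
  classical
  ext g
  rw [LinearMap.BilinForm.mem_orthogonal_iff]
  constructor
  · intro hO S h1 h2
    have hmem : chi S ∈ Ceps m ε := Submodule.subset_span ⟨S, h1, h2, rfl⟩
    have := hO (chi S) hmem
    rwa [show (dotB (Veps m ε)) (chi S) g = chi S ⬝ᵥ g from rfl, chi_dot] at this
  · intro hD n hn
    induction hn using Submodule.span_induction with
    | mem w hw =>
      obtain ⟨S, h1, h2, rfl⟩ := hw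
      show chi S ⬝ᵥ g = 0
      rw [chi_dot]
      exact hD S h1 h2
    | zero =>
      rw [map_zero, LinearMap.zero_apply]
    | add x y _ _ hx hy =>
      rw [map_add, LinearMap.add_apply, hx, hy, add_zero]
    | smul c x _ hx =>
      rw [_root_.map_smul, LinearMap.smul_apply, hx, smul_zero]

theorem stmt_15 (m : ℕ) (hm : 3 ≤ m) (ε : ZMod 2) :
    Module.finrank (ZMod 2) (Ceps m ε) =
      (if ε = 0 then 2 ^ (m - 1) * (2 ^ m + 1)
       else 2 ^ (m - 1) * (2 ^ m - 1)) - (2 * m + 1) := by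
  classical
  have horto := LinearMap.BilinForm.finrank_orthogonal (dotB_nondeg (Veps m ε))
    (Ceps m ε)
  rw [orth_eq m ε, finrank_Dsub hm ε] at horto
  have hF : Module.finrank (ZMod 2) (Veps m ε → ZMod 2) = Fintype.card (Veps m ε) := by
    rw [Module.finrank_pi]
  rw [hF] at horto
  have hle : Module.finrank (ZMod 2) (Ceps m ε) ≤ Fintype.card (Veps m ε) := by
    have := Submodule.finrank_le (Ceps m ε)
    rwa [hF] at this
  have hN := card_Veps (m := m) ε
  have hNval : Fintype.card (Veps m ε) =
      (if ε = 0 then 2 ^ (m - 1) * (2 ^ m + 1) else 2 ^ (m - 1) * (2 ^ m - 1)) := by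
    rw [hN]
    have h2m : 2 ^ m = 2 * 2 ^ (m - 1) := by
      rw [← pow_succ']
      congr 1
      omega
    rcases z2cases ε with hε | hε
    · subst hε
      rw [if_pos rfl, if_pos rfl]
      set a := 2 ^ (m - 1) with ha
      have ha1 : 1 ≤ a := Nat.one_le_two_pow
      have hab : a ≤ a * a := Nat.le_mul_of_pos_left a ha1
      rw [h2m, Nat.sub_mul, one_mul]
      have e1 : 2 * a * a = 2 * (a * a) := by ring
      have e2 : a * (2 * a + 1) = 2 * (a * a) + a := by ring
      rw [e1, e2]
      omega
    · subst hε
      rw [if_neg (by decide), if_neg (by decide), zero_add, mul_comm]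
  rw [hNval] at horto hle
  omega
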